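/- Let r ≤ n, let N ∈ ℝ^{n×r} have full column rank r, let Λ_w be an r×r diagonal matrix with positive diagonal entries, and set Ξ = C^{-1/2} N Λ_w with singular value decomposition Ξ = U Λ_ξ Vᵀ, where Uᵀ U = Vᵀ V = I_r and Λ_ξ = diag(ξ_1,…,ξ_r), ξ_i > 0. If a ∈ ℝ^{n×r} satisfies aᵀ Σ a = I_r and tr(aᵀ Λ_σ N Λ_w) = Σ_{i=1}^r ξ_i, then a = Λ_σ^{-1} C^{-1/2} U Vᵀ; that is, the maximizer is unique. -/

import Mathlib

open Matrix BigOperators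

/-- The positive semidefinite square root of a positive semidefinite matrix
(the definition of `Matrix.PosSemidef.sqrt` in the older Mathlib, since removed). -/
noncomputable def Matrix.PosSemidef.sqrt {n : Type*} [Fintype n] [DecidableEq n]
    {A : Matrix n n ℝ} (hA : A.PosSemidef) : Matrix n n ℝ :=
  hA.1.eigenvectorUnitary.1 * diagonal (fun i => Real.sqrt (hA.1.eigenvalues i)) *
    (star hA.1.eigenvectorUnitary : Matrix n n ℝ)

private lemma trace_mul_diag {r : ℕ} (A : Matrix (Fin r) (Fin r) ℝ) (d : Fin r → ℝ) :
    (A * Matrix.diagonal d).trace = ∑ i, A i i * d i := by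
  simp [Matrix.trace, Matrix.diag, Matrix.mul_diagonal]

/-- **Proxy-VAR OASIS uniqueness.** If `N` has full column rank `r`, all singular
values `ξ_i` of `Ξ = C^{-1/2} N Λ_w` are positive, and `a` with `aᵀ Σ a = I_r`
attains `tr(aᵀ Λ_σ N Λ_w) = Σ_i ξ_i`, then `a = Λ_σ⁻¹ C^{-1/2} U Vᵀ`. -/
theorem stmt_9 {n r : ℕ} (hr : r ≤ n)
    (S : Matrix (Fin n) (Fin n) ℝ) (hS : S.PosDef)
    (Ls : Matrix (Fin n) (Fin n) ℝ)
    (hLs : Ls = Matrix.diagonal (fun i => Real.sqrt (S i i)))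
    (C : Matrix (Fin n) (Fin n) ℝ) (hC : C = Ls⁻¹ * S * Ls⁻¹)
    (hCpd : C.PosDef)
    (N : Matrix (Fin n) (Fin r) ℝ) (hN : N.rank = r)
    (w : Fin r → ℝ) (hw : ∀ i, 0 < w i)
    (Lw : Matrix (Fin r) (Fin r) ℝ) (hLw : Lw = Matrix.diagonal w)
    (Xi : Matrix (Fin n) (Fin r) ℝ)
    (hXi : Xi = (hCpd.posSemidef.sqrt)⁻¹ * N * Lw)
    (U : Matrix (Fin n) (Fin r) ℝ) (V : Matrix (Fin r) (Fin r) ℝ)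
    (ξ : Fin r → ℝ) (hξ : ∀ i, 0 < ξ i)
    (hU : Uᵀ * U = 1) (hV : Vᵀ * V = 1)
    (hSVD : Xi = U * Matrix.diagonal ξ * Vᵀ)
    (a : Matrix (Fin n) (Fin r) ℝ) (ha : aᵀ * S * a = 1)
    (hmax : (aᵀ * Ls * N * Lw).trace = ∑ i, ξ i) :
    a = Ls⁻¹ * (hCpd.posSemidef.sqrt)⁻¹ * U * Vᵀ := by
  set M := hCpd.posSemidef.sqrt with hMdef
  have hMM : M * M = C := by
    have hsp := hCpd.posSemidef.1.spectral_theorem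
    have hu : star (hCpd.posSemidef.1.eigenvectorUnitary : Matrix (Fin n) (Fin n) ℝ)
        * hCpd.posSemidef.1.eigenvectorUnitary.1 = 1 := Unitary.star_mul_self_of_mem
          hCpd.posSemidef.1.eigenvectorUnitary.2
    have hD : diagonal (fun i => Real.sqrt (hCpd.posSemidef.1.eigenvalues i)) *
        diagonal (fun i => Real.sqrt (hCpd.posSemidef.1.eigenvalues i)) =
        diagonal (RCLike.ofReal ∘ hCpd.posSemidef.1.eigenvalues) := by
      rw [diagonal_mul_diagonal]
      congr 1
      ext i
      simp [Real.mul_self_sqrt (hCpd.posSemidef.eigenvalues_nonneg i)]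
    conv_rhs => rw [hsp]
    rw [Unitary.conjStarAlgAut_apply, hMdef, Matrix.PosSemidef.sqrt, ← hD]
    simp only [Matrix.mul_assoc]
    rw [← Matrix.mul_assoc (star _) _, hu, Matrix.one_mul]
  have hMsym : Mᵀ = M := by
    simp [hMdef, Matrix.PosSemidef.sqrt, Matrix.transpose_mul, Matrix.star_eq_conjTranspose,
      Matrix.mul_assoc]
  have hSdiag : ∀ i, 0 < S i i := fun i => by
    have h1 : (Pi.single i 1 : Fin n → ℝ) ≠ 0 := by
      intro h
      have := congrFun h i
      simp at this
    have := hS.dotProduct_mulVec_pos h1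
    simpa [Matrix.mulVec_single, dotProduct, Pi.single_apply] using this
  have hLspd : Ls.PosDef := by
    rw [hLs]
    exact .diagonal fun i => Real.sqrt_pos.mpr (hSdiag i)
  have hLsdet : IsUnit Ls.det := isUnit_iff_ne_zero.mpr hLspd.det_pos.ne'
  have hMdet : IsUnit M.det := by
    have h2 : M.det * M.det = C.det := by rw [← Matrix.det_mul, hMM]
    refine isUnit_iff_ne_zero.mpr fun h => ?_
    rw [h, mul_zero] at h2
    exact hCpd.det_pos.ne' h2.symm
  have hLssym : Lsᵀ = Ls := by rw [hLs, Matrix.diagonal_transpose]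
  have hSeq : Ls * C * Ls = S := by
    rw [hC]
    have h0 : Ls * (Ls⁻¹ * S * Ls⁻¹) * Ls = (Ls * Ls⁻¹) * S * (Ls⁻¹ * Ls) := by
      simp only [Matrix.mul_assoc]
    rw [h0, Matrix.mul_nonsing_inv _ hLsdet, Matrix.nonsing_inv_mul _ hLsdet,
      Matrix.one_mul, Matrix.mul_one]
  set b := M * (Ls * a) with hbdef
  have hbT : bᵀ = aᵀ * Ls * M := by
    rw [hbdef, Matrix.transpose_mul, Matrix.transpose_mul, hMsym, hLssym, Matrix.mul_assoc]
  have hb1 : bᵀ * b = 1 := by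
    rw [hbT, hbdef, ← ha, ← hSeq, ← hMM]
    simp only [Matrix.mul_assoc]
  have htr : (bᵀ * Xi).trace = ∑ i, ξ i := by
    rw [hbT, hXi, ← hmax]
    congr 1
    have h3 : M * (M⁻¹ * (N * Lw)) = N * Lw := by
      rw [← Matrix.mul_assoc, Matrix.mul_nonsing_inv _ hMdet, Matrix.one_mul]
    simp only [Matrix.mul_assoc, h3]
  set Q := Uᵀ * (b * V) with hQdef
  have hQtr : ∑ i, Q i i * ξ i = ∑ i, ξ i := by
    rw [← htr]
    calc ∑ i, Q i i * ξ i = ∑ i, Qᵀ i i * ξ i := by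
          simp [Matrix.transpose_apply]
      _ = (Qᵀ * Matrix.diagonal ξ).trace := (trace_mul_diag _ _).symm
      _ = (Vᵀ * (bᵀ * (U * Matrix.diagonal ξ))).trace := by
          congr 1
          rw [hQdef]
          simp only [Matrix.transpose_mul, Matrix.transpose_transpose, Matrix.mul_assoc]
      _ = ((bᵀ * (U * Matrix.diagonal ξ)) * Vᵀ).trace := (Matrix.trace_mul_comm _ _)
      _ = (bᵀ * Xi).trace := by
          rw [hSVD]
          congr 1
          simp only [Matrix.mul_assoc]
  have hUcol : ∀ i, ∑ k, U k i ^ 2 = 1 := fun i => by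
    have h : (Uᵀ * U) i i = 1 := by rw [hU, Matrix.one_apply_eq]
    simpa [Matrix.mul_apply, sq] using h
  have hcc : (b * V)ᵀ * (b * V) = 1 := by
    have h4 : (b * V)ᵀ * (b * V) = Vᵀ * ((bᵀ * b) * V) := by
      simp only [Matrix.transpose_mul, Matrix.mul_assoc]
    rw [h4, hb1, Matrix.one_mul, hV]
  have hccol : ∀ i, ∑ k, (b * V) k i ^ 2 = 1 := fun i => by
    have h : ((b * V)ᵀ * (b * V)) i i = 1 := by rw [hcc, Matrix.one_apply_eq]
    simpa [Matrix.mul_apply, sq, mul_comm] using h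
  have hQii : ∀ i, Q i i = ∑ k, U k i * (b * V) k i := fun i => by
    simp [hQdef, Matrix.mul_apply]
  have hQle : ∀ i, Q i i ≤ 1 := fun i => by
    have cs := Finset.sum_mul_sq_le_sq_mul_sq Finset.univ
      (fun k => U k i) (fun k => (b * V) k i)
    rw [hUcol i, hccol i, one_mul] at cs
    rw [hQii i]
    nlinarith [cs]
  have hQeq : ∀ i, Q i i = 1 := by
    have hsum : ∑ i, (1 - Q i i) * ξ i = 0 := by
      have h5 : ∑ i, (1 - Q i i) * ξ i = ∑ i, ξ i - ∑ i, Q i i * ξ i := by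
        rw [← Finset.sum_sub_distrib]
        congr 1
        ext i
        ring
      rw [h5, hQtr, sub_self]
    intro i
    have h6 := (Finset.sum_eq_zero_iff_of_nonneg
      (fun i _ => mul_nonneg (by linarith [hQle i]) (hξ i).le)).mp hsum i (Finset.mem_univ i)
    rcases mul_eq_zero.mp h6 with h | h
    · linarith
    · exact absurd h (hξ i).ne'
  have hbV : b * V = U := by
    ext k i
    have hz : ∑ k, (U k i - (b * V) k i) ^ 2 = 0 := by
      have hdot : ∑ k, U k i * (b * V) k i = 1 := by rw [← hQii i, hQeq i]
      have expand : ∀ k : Fin n, (U k i - (b * V) k i) ^ 2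
          = U k i ^ 2 - 2 * (U k i * (b * V) k i) + (b * V) k i ^ 2 := fun k => by ring
      simp only [expand]
      rw [Finset.sum_add_distrib, Finset.sum_sub_distrib, hUcol i, hccol i,
        ← Finset.mul_sum, hdot]
      ring
    have h7 := (Finset.sum_eq_zero_iff_of_nonneg
      (fun k _ => sq_nonneg (U k i - (b * V) k i))).mp hz k (Finset.mem_univ k)
    have := pow_eq_zero_iff (n := 2) (by norm_num) |>.mp h7
    linarith [sub_eq_zero.mp this]
  have hbUV : b = U * Vᵀ := by
    have hVVt : V * Vᵀ = 1 := mul_eq_one_comm.mp hV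
    have h8 := congrArg (fun X => X * Vᵀ) hbV
    simp only [Matrix.mul_assoc, hVVt, Matrix.mul_one] at h8
    exact h8
  have hfin : Ls⁻¹ * (M⁻¹ * b) = a := by
    rw [hbdef, ← Matrix.mul_assoc M⁻¹, Matrix.nonsing_inv_mul _ hMdet, Matrix.one_mul,
      ← Matrix.mul_assoc, Matrix.nonsing_inv_mul _ hLsdet, Matrix.one_mul]
  rw [← hfin, hbUV]
  simp only [Matrix.mul_assoc]
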